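/- Let Act be a finite nonempty set, for each α ∈ Act let E_α be a trace-preserving super-operator on d×d complex matrices, and let p_1, …, p_t be projections; set φ = range(p_1) ∪ ⋯ ∪ range(p_t) ⊆ ℂ^d. Then there exists a set ψ ⊆ ℂ^d which is a finite union of linear subspaces such that for every density matrix σ₀ the following are equivalent: (i) for every k ≥ 0 and every word α₁⋯α_k ∈ Act^k, supp(E_{α_k} ∘ ⋯ ∘ E_{α_1}(σ₀)) ⊆ φ; (ii) supp(σ₀) ⊆ ψ. (This set ψ witnesses the decidability of the invariance property □φ.) -/

import Mathlib

open Matrix ComplexOrder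

/-- The super-operator with Kraus operators `(E_i)`: `ρ ↦ Σ_i E_i ρ E_iᴴ`. -/
noncomputable def superOp {d : ℕ} {I : Type} [Fintype I]
    (E : I → Matrix (Fin d) (Fin d) ℂ) (ρ : Matrix (Fin d) (Fin d) ℂ) :
    Matrix (Fin d) (Fin d) ℂ :=
  ∑ i, E i * ρ * (E i)ᴴ

/-- A set is a finite union of linear subspaces. -/
def IsFinUnionSubspaces {d : ℕ} (X : Set (Fin d → ℂ)) : Prop :=
  ∃ (m : ℕ) (V : Fin m → Submodule ℂ (Fin d → ℂ)), X = ⋃ i, (V i : Set (Fin d → ℂ))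

namespace InvarianceAux

variable {d : ℕ}

lemma range_mul_conjTranspose {m : Type} [Fintype m] (A : Matrix (Fin d) m ℂ) :
    LinearMap.range (A * Aᴴ).mulVecLin = LinearMap.range A.mulVecLin := by
  apply Submodule.eq_of_le_of_finrank_le
  · rw [Matrix.mulVecLin_mul]
    exact LinearMap.range_comp_le_range _ _
  · have h := Matrix.rank_self_mul_conjTranspose A
    unfold Matrix.rank at h
    exact le_of_eq h.symm

lemma range_sum_mul_conjTranspose {I : Type} [Fintype I] {m : Type} [Fintype m]
    (M : I → Matrix (Fin d) m ℂ) :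
    LinearMap.range (∑ i, M i * (M i)ᴴ).mulVecLin
      = ⨆ i, LinearMap.range (M i).mulVecLin := by
  classical
  set C : Matrix (Fin d) (m × I) ℂ := fun r c => M c.2 r c.1 with hC
  have hCC : C * Cᴴ = ∑ i, M i * (M i)ᴴ := by
    ext r s
    rw [Matrix.mul_apply]
    simp only [Matrix.mul_apply, Matrix.conjTranspose_apply, Matrix.sum_apply, hC]
    simp only [Fintype.sum_prod_type]
    exact Finset.sum_comm
  rw [← hCC, range_mul_conjTranspose]
  apply le_antisymm
  · rintro x ⟨v, rfl⟩
    rw [Matrix.mulVecLin_apply]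
    have hsplit : C *ᵥ v = ∑ i, M i *ᵥ (fun c => v (c, i)) := by
      ext r
      simp only [Matrix.mulVec, dotProduct, hC, Finset.sum_apply]
      simp only [Fintype.sum_prod_type]
      exact Finset.sum_comm
    rw [hsplit]
    exact Submodule.sum_mem _ fun i _ =>
      Submodule.mem_iSup_of_mem i ⟨fun c => v (c, i), rfl⟩
  · apply iSup_le
    rintro i x ⟨y, rfl⟩
    refine ⟨fun ci => if ci.2 = i then y ci.1 else 0, ?_⟩
    rw [Matrix.mulVecLin_apply, Matrix.mulVecLin_apply]
    ext r
    simp only [Matrix.mulVec, dotProduct, hC]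
    simp only [Fintype.sum_prod_type]
    rw [Finset.sum_comm]
    simp [mul_ite, mul_zero, Finset.sum_ite_eq', Finset.mem_univ]

lemma superOp_posSemidef {I : Type} [Fintype I] (E : I → Matrix (Fin d) (Fin d) ℂ)
    {σ : Matrix (Fin d) (Fin d) ℂ} (hσ : σ.PosSemidef) : (superOp E σ).PosSemidef := by
  unfold superOp
  refine Finset.sum_induction _ _ (fun a b ha hb => ha.add hb) Matrix.PosSemidef.zero
    fun i _ => hσ.mul_mul_conjTranspose_same (E i)

lemma supp_superOp {I : Type} [Fintype I] (E : I → Matrix (Fin d) (Fin d) ℂ)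
    {σ : Matrix (Fin d) (Fin d) ℂ} (hσ : σ.PosSemidef) :
    LinearMap.range (superOp E σ).mulVecLin
      = ⨆ i, (LinearMap.range σ.mulVecLin).map (E i).mulVecLin := by
  classical
  obtain ⟨B, hB⟩ : ∃ B : Matrix (Fin d) (Fin d) ℂ, σ = star B * B := by
    open scoped MatrixOrder in exact CStarAlgebra.nonneg_iff_eq_star_mul_self.mp hσ.nonneg
  have hσeq : σ = Bᴴ * Bᴴᴴ := by rw [conjTranspose_conjTranspose]; exact hB
  have h1 : superOp E σ = ∑ i, (E i * Bᴴ) * (E i * Bᴴ)ᴴ := by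
    unfold superOp
    refine Finset.sum_congr rfl fun i _ => ?_
    rw [Matrix.conjTranspose_mul]
    conv_lhs => rw [hσeq]
    simp only [Matrix.mul_assoc]
  rw [h1, range_sum_mul_conjTranspose]
  have h2 : LinearMap.range σ.mulVecLin = LinearMap.range Bᴴ.mulVecLin := by
    conv_lhs => rw [hσeq]
    exact range_mul_conjTranspose Bᴴ
  refine iSup_congr fun i => ?_
  rw [Matrix.mulVecLin_mul, LinearMap.range_comp, h2]

lemma submodule_le_of_subset_iUnion {M : Type*} [AddCommGroup M] [Module ℂ M]
    {ι : Type} [Fintype ι] (V : ι → Submodule ℂ M) (W : Submodule ℂ M)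
    (h : (W : Set M) ⊆ ⋃ i, (V i : Set M)) : ∃ i, W ≤ V i := by
  classical
  suffices H : ∀ s : Finset ι, ((W : Set M) ⊆ ⋃ i ∈ s, (V i : Set M)) → ∃ i ∈ s, W ≤ V i by
    obtain ⟨i, _, hi⟩ := H Finset.univ (by simpa using h)
    exact ⟨i, hi⟩
  intro s
  induction s using Finset.induction_on with
  | empty =>
    intro hs
    have := hs W.zero_mem
    simp at this
  | @insert a s ha ih =>
    intro hs
    by_cases hsub : (W : Set M) ⊆ ⋃ i ∈ s, (V i : Set M)
    · obtain ⟨i, hi, hle⟩ := ih hsub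
      exact ⟨i, Finset.mem_insert_of_mem hi, hle⟩
    · rw [Set.not_subset] at hsub
      obtain ⟨x, hxW, hxs⟩ := hsub
      have hxa : x ∈ V a := by
        have hx := hs hxW
        simp only [Set.mem_iUnion, SetLike.mem_coe, exists_prop] at hx hxs
        obtain ⟨i, hi, hxi⟩ := hx
        rcases Finset.mem_insert.mp hi with rfl | hi
        · exact hxi
        · exact absurd ⟨i, hi, hxi⟩ hxs
      by_cases hWa : W ≤ V a
      · exact ⟨a, Finset.mem_insert_self a s, hWa⟩
      · obtain ⟨y, hyW, hya⟩ : ∃ y ∈ W, y ∉ V a := by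
          by_contra hcon
          push_neg at hcon
          exact hWa hcon
        have key : ∀ c : ℂ, ∃ i, i ∈ s ∧ y + c • x ∈ V i := by
          intro c
          have hmem : y + c • x ∈ W := W.add_mem hyW (W.smul_mem c hxW)
          have hx := hs hmem
          simp only [Set.mem_iUnion, SetLike.mem_coe, exists_prop] at hx
          obtain ⟨i, hi, hxi⟩ := hx
          rcases Finset.mem_insert.mp hi with rfl | hi
          · exfalso
            apply hya
            have := (V i).sub_mem hxi ((V i).smul_mem c hxa)
            simpa using this
          · exact ⟨i, hi, hxi⟩
        choose f hf1 hf2 using key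
        obtain ⟨c, c', hne, hfe⟩ := Finite.exists_ne_map_eq_of_infinite f
        exfalso
        apply hxs
        have h1 := hf2 c
        have h2 := hf2 c'
        rw [hfe] at h1
        have h3 : (c - c') • x ∈ V (f c') := by
          have := (V (f c')).sub_mem h1 h2
          simpa [sub_smul] using this
        have hx : x ∈ V (f c') := by
          have := (V (f c')).smul_mem (c - c')⁻¹ h3
          rwa [smul_smul, inv_mul_cancel₀ (sub_ne_zero.mpr hne), one_smul] at this
        simp only [Set.mem_iUnion, SetLike.mem_coe, exists_prop]
        exact ⟨f c', hf1 c', hx⟩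

section Dynamics

variable {Act : Type} [Fintype Act] {I : Act → Type} [∀ α, Fintype (I α)]
variable (E : (α : Act) → I α → Matrix (Fin d) (Fin d) ℂ)
variable {t : ℕ} (p : Fin t → Matrix (Fin d) (Fin d) ℂ)

noncomputable def P (j : Fin t) : Submodule ℂ (Fin d → ℂ) := LinearMap.range (p j).mulVecLin

noncomputable def step (α : Act) (V : Submodule ℂ (Fin d → ℂ)) : Submodule ℂ (Fin d → ℂ) :=
  ⨆ i : I α, V.map (E α i).mulVecLin

noncomputable def reach (w : List Act) (V : Submodule ℂ (Fin d → ℂ)) : Submodule ℂ (Fin d → ℂ) :=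
  w.foldl (fun V α => step E α V) V

lemma step_mono {α : Act} {V W : Submodule ℂ (Fin d → ℂ)} (h : V ≤ W) :
    step E α V ≤ step E α W :=
  iSup_mono fun _ => Submodule.map_mono h

lemma reach_mono : ∀ (w : List Act) {V W : Submodule ℂ (Fin d → ℂ)},
    V ≤ W → reach E w V ≤ reach E w W
  | [], _, _, h => h
  | _ :: w, _, _, h => reach_mono w (step_mono E h)

def GoodN (n : ℕ) (V : Submodule ℂ (Fin d → ℂ)) : Prop :=
  ∀ w : List Act, w.length ≤ n → ∃ j, reach E w V ≤ P p j

lemma GoodN_anti {n : ℕ} {V W : Submodule ℂ (Fin d → ℂ)} (h : V ≤ W)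
    (hW : GoodN E p n W) : GoodN E p n V := fun w hw =>
  let ⟨j, hj⟩ := hW w hw
  ⟨j, (reach_mono E w h).trans hj⟩

lemma GoodN_mono_n {n m : ℕ} {V : Submodule ℂ (Fin d → ℂ)} (h : n ≤ m)
    (hW : GoodN E p m V) : GoodN E p n V := fun w hw => hW w (hw.trans h)

lemma goodN_succ_iff {n : ℕ} {V : Submodule ℂ (Fin d → ℂ)} :
    GoodN E p (n + 1) V ↔ (∃ j, V ≤ P p j) ∧ ∀ α, GoodN E p n (step E α V) := by
  constructor
  · intro h
    exact ⟨h [] (by simp), fun α w hw => h (α :: w) (by simpa using hw)⟩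
  · rintro ⟨h0, h1⟩ w hw
    cases w with
    | nil => exact h0
    | cons α w => exact h1 α w (by simpa using hw)

def X (n : ℕ) : Set (Fin d → ℂ) := {v | GoodN E p n (Submodule.span ℂ {v})}

lemma X_anti {n m : ℕ} (h : n ≤ m) : X E p m ⊆ X E p n :=
  fun _ hv => GoodN_mono_n E p h hv

lemma rec_rep : ∀ n : ℕ, ∃ (ι : Type) (_ : Fintype ι) (V : ι → Submodule ℂ (Fin d → ℂ)),
    (X E p n = ⋃ i, (V i : Set (Fin d → ℂ))) ∧ ∀ i, GoodN E p n (V i) := by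
  classical
  intro n
  induction n with
  | zero =>
    refine ⟨Fin t, inferInstance, P p, ?_, ?_⟩
    · ext v
      simp only [Set.mem_iUnion, SetLike.mem_coe]
      constructor
      · intro hv
        obtain ⟨j, hj⟩ := hv [] (by simp)
        exact ⟨j, (Submodule.span_singleton_le_iff_mem v _).mp hj⟩
      · rintro ⟨j, hj⟩ w hw
        rw [Nat.le_zero, List.length_eq_zero_iff] at hw
        subst hw
        exact ⟨j, (Submodule.span_singleton_le_iff_mem v _).mpr hj⟩
    · intro j w hw
      rw [Nat.le_zero, List.length_eq_zero_iff] at hw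
      subst hw
      exact ⟨j, le_rfl⟩
  | succ n ih =>
    obtain ⟨ι, hι, V, hrep, hgood⟩ := ih
    have claimC : ∀ Wsub : Submodule ℂ (Fin d → ℂ),
        GoodN E p n Wsub ↔ (Wsub : Set (Fin d → ℂ)) ⊆ X E p n := by
      intro Wsub
      constructor
      · intro h v hv
        exact GoodN_anti E p ((Submodule.span_singleton_le_iff_mem v _).mpr hv) h
      · intro h
        rw [hrep] at h
        obtain ⟨i, hi⟩ := submodule_le_of_subset_iUnion V Wsub h
        exact GoodN_anti E p hi (hgood i)
    have hstep : ∀ (α : Act) (v : Fin d → ℂ) (Q : Submodule ℂ (Fin d → ℂ)),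
        step E α (Submodule.span ℂ {v}) ≤ Q ↔ ∀ k : I α, (E α k).mulVecLin v ∈ Q := by
      intro α v Q
      unfold step
      rw [iSup_le_iff]
      refine forall_congr' fun k => ?_
      rw [Submodule.map_span, Set.image_singleton, Submodule.span_singleton_le_iff_mem]
    set V' : (Fin t × (Act → ι)) → Submodule ℂ (Fin d → ℂ) := fun q =>
      P p q.1 ⊓ ⨅ α, ⨅ k : I α, Submodule.comap (E α k).mulVecLin (V (q.2 α)) with hV'
    have hmemV' : ∀ (q : Fin t × (Act → ι)) (v : Fin d → ℂ),
        v ∈ V' q ↔ v ∈ P p q.1 ∧ ∀ (α : Act) (k : I α), (E α k).mulVecLin v ∈ V (q.2 α) := by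
      intro q v
      simp [hV', Submodule.mem_inf, Submodule.mem_iInf, Submodule.mem_comap]
    refine ⟨Fin t × (Act → ι), inferInstance, V', ?_, ?_⟩
    · ext v
      simp only [Set.mem_iUnion, SetLike.mem_coe]
      show GoodN E p (n + 1) (Submodule.span ℂ {v}) ↔ _
      rw [goodN_succ_iff]
      constructor
      · rintro ⟨⟨j, hj⟩, hα⟩
        have hchoice : ∀ α : Act, ∃ i : ι, ∀ k : I α, (E α k).mulVecLin v ∈ V i := by
          intro α
          have h1 := (claimC _).mp (hα α)
          rw [hrep] at h1
          obtain ⟨i, hi⟩ := submodule_le_of_subset_iUnion V _ h1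
          exact ⟨i, (hstep α v (V i)).mp hi⟩
        choose g hg using hchoice
        refine ⟨(j, g), ?_⟩
        rw [hmemV']
        exact ⟨(Submodule.span_singleton_le_iff_mem v _).mp hj, fun α k => hg α k⟩
      · rintro ⟨⟨j, g⟩, hv⟩
        rw [hmemV'] at hv
        refine ⟨⟨j, (Submodule.span_singleton_le_iff_mem v _).mpr hv.1⟩, fun α => ?_⟩
        apply (claimC _).mpr
        have hle : step E α (Submodule.span ℂ {v}) ≤ V (g α) :=
          (hstep α v _).mpr (hv.2 α)
        rw [hrep]
        exact fun x hx => Set.mem_iUnion.mpr ⟨g α, hle hx⟩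
    · rintro ⟨j, g⟩
      rw [goodN_succ_iff]
      refine ⟨⟨j, inf_le_left⟩, fun α => ?_⟩
      refine GoodN_anti E p ?_ (hgood (g α))
      refine iSup_le fun k => ?_
      rw [Submodule.map_le_iff_le_comap]
      exact inf_le_right.trans ((iInf_le _ α).trans (iInf_le _ k))

lemma goodN_iff_subset (n : ℕ) (W : Submodule ℂ (Fin d → ℂ)) :
    GoodN E p n W ↔ (W : Set (Fin d → ℂ)) ⊆ X E p n := by
  obtain ⟨ι, hι, V, hrep, hgood⟩ := rec_rep E p n
  constructor
  · intro h v hv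
    exact GoodN_anti E p ((Submodule.span_singleton_le_iff_mem v _).mpr hv) h
  · intro h
    rw [hrep] at h
    obtain ⟨i, hi⟩ := submodule_le_of_subset_iUnion V W h
    exact GoodN_anti E p hi (hgood i)

end Dynamics

noncomputable def vanishingIdeal (S : Set (Fin d → ℂ)) : Ideal (MvPolynomial (Fin d) ℂ) where
  carrier := {q | ∀ v ∈ S, MvPolynomial.eval v q = 0}
  add_mem' := by
    intro a b ha hb v hv
    simp [map_add, ha v hv, hb v hv]
  zero_mem' := by intro v hv; simp
  smul_mem' := by
    intro c q hq v hv
    simp [smul_eq_mul, hq v hv]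

lemma mem_vanishingIdeal {S : Set (Fin d → ℂ)} {q : MvPolynomial (Fin d) ℂ} :
    q ∈ vanishingIdeal S ↔ ∀ v ∈ S, MvPolynomial.eval v q = 0 := Iff.rfl

lemma vanishingIdeal_anti {S T : Set (Fin d → ℂ)} (h : S ⊆ T) :
    vanishingIdeal T ≤ vanishingIdeal S := fun _ hq v hv => hq v (h hv)

noncomputable def dualPoly (ℓ : Module.Dual ℂ (Fin d → ℂ)) : MvPolynomial (Fin d) ℂ :=
  ∑ k, MvPolynomial.C (ℓ (Pi.single k 1)) * MvPolynomial.X k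

lemma eval_dualPoly (ℓ : Module.Dual ℂ (Fin d → ℂ)) (v : Fin d → ℂ) :
    MvPolynomial.eval v (dualPoly ℓ) = ℓ v := by
  rw [LinearMap.pi_apply_eq_sum_univ ℓ v]
  unfold dualPoly
  rw [_root_.map_sum]
  refine Finset.sum_congr rfl fun k _ => ?_
  rw [_root_.map_mul, MvPolynomial.eval_C, MvPolynomial.eval_X, mul_comm, smul_eq_mul]
  congr 1
  congr 1
  ext j
  simp [Pi.single_apply, eq_comm]

lemma subset_of_vanishing_le {ι : Type} [Fintype ι] (V : ι → Submodule ℂ (Fin d → ℂ))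
    (S T : Set (Fin d → ℂ)) (hS : S = ⋃ i, (V i : Set (Fin d → ℂ)))
    (hJ : vanishingIdeal S ≤ vanishingIdeal T) : T ⊆ S := by
  intro x hxT
  by_contra hxS
  have hx : ∀ i, x ∉ V i := by
    rw [hS] at hxS
    intro i hi
    exact hxS (Set.mem_iUnion.mpr ⟨i, hi⟩)
  have hl : ∀ i, ∃ ℓ : Module.Dual ℂ (Fin d → ℂ), ℓ x ≠ 0 ∧ ∀ v ∈ V i, ℓ v = 0 := by
    intro i
    obtain ⟨f, hf0, hf⟩ := Submodule.exists_dual_map_eq_bot_of_notMem (hx i) inferInstance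
    refine ⟨f, hf0, fun v hv => ?_⟩
    have hm : f v ∈ (V i).map f := Submodule.mem_map_of_mem hv
    rw [hf] at hm
    simpa using hm
  choose ℓ h1 h2 using hl
  have hqS : (∏ i, dualPoly (ℓ i)) ∈ vanishingIdeal S := by
    intro v hv
    rw [hS] at hv
    obtain ⟨U, ⟨i, rfl⟩, hi⟩ := hv
    rw [map_prod]
    exact Finset.prod_eq_zero (Finset.mem_univ i) (by rw [eval_dualPoly]; exact h2 i v hi)
  have hzero := hJ hqS x hxT
  rw [map_prod] at hzero
  obtain ⟨i, _, hi⟩ := Finset.prod_eq_zero_iff.mp hzero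
  rw [eval_dualPoly] at hi
  exact h1 i hi

end InvarianceAux

open InvarianceAux

theorem invariance_characterized_by_fin_union_subspaces
    {d : ℕ} {Act : Type} [Fintype Act] [Nonempty Act]
    {I : Act → Type} [∀ α, Fintype (I α)]
    (E : (α : Act) → I α → Matrix (Fin d) (Fin d) ℂ)
    (htp : ∀ α, ∑ i, (E α i)ᴴ * E α i = (1 : Matrix (Fin d) (Fin d) ℂ))
    {t : ℕ} (p : Fin t → Matrix (Fin d) (Fin d) ℂ)
    (hp1 : ∀ i, (p i).IsHermitian) (hp2 : ∀ i, p i * p i = p i)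
    (φ : Set (Fin d → ℂ))
    (hφ : φ = ⋃ i, (LinearMap.range (p i).mulVecLin : Set (Fin d → ℂ))) :
    ∃ ψ : Set (Fin d → ℂ), IsFinUnionSubspaces ψ ∧
      ∀ σ₀ : Matrix (Fin d) (Fin d) ℂ, σ₀.PosSemidef → σ₀.trace = 1 →
        ((∀ w : List Act,
            (LinearMap.range (w.foldl (fun ρ α => superOp (E α) ρ) σ₀).mulVecLin :
              Set (Fin d → ℂ)) ⊆ φ) ↔
          (LinearMap.range σ₀.mulVecLin : Set (Fin d → ℂ)) ⊆ ψ) := by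
  classical
  -- the ideal sequence
  have hJmono : Monotone (fun n => vanishingIdeal (X E p n)) := by
    intro a b hab
    exact vanishingIdeal_anti (X_anti E p hab)
  obtain ⟨N, hN⟩ := monotone_stabilizes_iff_noetherian.mpr
    (inferInstance : IsNoetherian (MvPolynomial (Fin d) ℂ) (MvPolynomial (Fin d) ℂ))
    ⟨fun n => vanishingIdeal (X E p n), hJmono⟩
  -- stabilization of the X sequence
  have hstep : ∀ n, N ≤ n → X E p n = X E p (n + 1) := by
    intro n hn
    obtain ⟨ι, hι, V, hrep, _⟩ := rec_rep E p (n + 1)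
    refine le_antisymm ?_ (X_anti E p (Nat.le_succ n))
    refine subset_of_vanishing_le V _ _ hrep ?_
    have e1 := hN n hn
    have e2 := hN (n + 1) (hn.trans (Nat.le_succ n))
    simp only [OrderHom.coe_mk] at e1 e2
    rw [← e1, e2]
  have hstab : ∀ n, N ≤ n → X E p n = X E p N := by
    intro n hn
    induction n with
    | zero => rw [Nat.le_zero] at hn; rw [hn]
    | succ n ih =>
      rcases Nat.lt_or_ge N (n + 1) with h | h
      · have hn' : N ≤ n := Nat.lt_succ_iff.mp h
        rw [← hstep n hn', ih hn']
      · have : N = n + 1 := le_antisymm hn h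
        rw [this]
  refine ⟨X E p N, ?_, ?_⟩
  · obtain ⟨ι, hι, V, hrep, _⟩ := rec_rep E p N
    refine ⟨@Fintype.card ι hι, fun j => V ((@Fintype.equivFin ι hι).symm j), ?_⟩
    rw [hrep]
    ext x
    simp only [Set.mem_iUnion, SetLike.mem_coe]
    constructor
    · rintro ⟨i, hi⟩
      exact ⟨@Fintype.equivFin ι hι i, by simpa using hi⟩
    · rintro ⟨j, hj⟩
      exact ⟨(@Fintype.equivFin ι hι).symm j, hj⟩
  · intro σ₀ hσ₀ _
    have hfold : ∀ (w : List Act) (σ : Matrix (Fin d) (Fin d) ℂ), σ.PosSemidef →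
        (w.foldl (fun ρ α => superOp (E α) ρ) σ).PosSemidef ∧
        LinearMap.range (w.foldl (fun ρ α => superOp (E α) ρ) σ).mulVecLin
          = reach E w (LinearMap.range σ.mulVecLin) := by
      intro w
      induction w with
      | nil => intro σ h; exact ⟨h, rfl⟩
      | cons α w ih =>
        intro σ h
        have h1 := superOp_posSemidef (E α) h
        obtain ⟨ha, hb⟩ := ih (superOp (E α) σ) h1
        refine ⟨ha, ?_⟩
        show LinearMap.range _ = reach E w (step E α (LinearMap.range σ.mulVecLin))
        rw [List.foldl_cons, hb, supp_superOp (E α) h]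
        rfl
    have hsub_iff : ∀ W : Submodule ℂ (Fin d → ℂ),
        ((W : Set (Fin d → ℂ)) ⊆ φ) ↔ ∃ j, W ≤ P p j := by
      intro W
      rw [hφ]
      constructor
      · intro h
        exact submodule_le_of_subset_iUnion (fun j => LinearMap.range (p j).mulVecLin) W h
      · rintro ⟨j, hj⟩ x hx
        exact Set.mem_iUnion.mpr ⟨j, hj hx⟩
    constructor
    · intro h
      refine (goodN_iff_subset E p N _).mp ?_
      intro w _
      have hw := h w
      rw [(hfold w σ₀ hσ₀).2] at hw
      exact (hsub_iff _).mp hw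
    · intro h w
      set n := max N w.length with hn
      have hXn : X E p n = X E p N := hstab n (le_max_left _ _)
      have hG : GoodN E p n (LinearMap.range σ₀.mulVecLin) := by
        refine (goodN_iff_subset E p n _).mpr ?_
        rw [hXn]
        exact h
      obtain ⟨j, hj⟩ := hG w (le_max_right _ _)
      rw [(hfold w σ₀ hσ₀).2]
      exact (hsub_iff _).mpr ⟨j, hj⟩
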